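/- arXiv:2303.11231 — 2 statements merged into one kernel-verified Lean document; each statement's English description precedes it below -/
import Mathlib

section
/- If a class C of graphs is χ-bounded by a function f, then the mixed extension ME(C) is χ-bounded: for each ω there exists c(ω) such that every G ∈ ME(C) with clique number ω satisfies χ(G) ≤ c(ω), where c satisfies the recurrence c(ω) ≤ (c(ω−1)+1)·f(ω) + c(ω−1) + 1. -/
def ZoneHorizontal {m n : ℕ} (M : Matrix (Fin m) (Fin n) (Fin 3))
    (R : Fin m → Prop) (C : Fin n → Prop) : Prop :=
  ∀ i, R i → ∀ j j', C j → C j' → M i j = M i j'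

def ZoneVertical {m n : ℕ} (M : Matrix (Fin m) (Fin n) (Fin 3))
    (R : Fin m → Prop) (C : Fin n → Prop) : Prop :=
  ∀ j, C j → ∀ i i', R i → R i' → M i j = M i' j

def ZoneMixed {m n : ℕ} (M : Matrix (Fin m) (Fin n) (Fin 3))
    (R : Fin m → Prop) (C : Fin n → Prop) : Prop :=
  (¬ ZoneHorizontal M R C ∧ ¬ ZoneVertical M R C) ∨
    ((∃ i i', R i ∧ R i' ∧ i ≠ i') ∧ (∃ j j', C j ∧ C j' ∧ j ≠ j') ∧
      ∃ i j, R i ∧ C j ∧ M i j = 2)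

open Classical in
/-- Adjacency matrix of `G` in the natural order of `Fin n`, `*` = `2` on the
diagonal. -/
noncomputable def adjMat {n : ℕ} (G : SimpleGraph (Fin n)) :
    Matrix (Fin n) (Fin n) (Fin 3) :=
  fun i j => if i = j then 2 else if G.Adj i j then 1 else 0

/-- `Mix` is the mixed subgraph of the ordered graph `H` for the interval
partition `part`: it keeps exactly the edges of `H` between pairs of distinct
intervals whose zone in the adjacency matrix is mixed. -/
def IsMixSubgraph {n k : ℕ} (H : SimpleGraph (Fin n)) (part : Fin n → Fin k)
    (Mix : SimpleGraph (Fin n)) : Prop :=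
  ∀ u v, Mix.Adj u v ↔ H.Adj u v ∧ part u ≠ part v ∧
    ZoneMixed (adjMat H) (fun x => part x = part u) (fun y => part y = part v)

/-- `G` belongs to the mixed extension `ME(C)`: for some vertex ordering
(i.e. some relabelling `H = G ∘ σ` of `G`), every interval partition has its
mixed subgraph in `C`. -/
def MEMember (C : ∀ m : ℕ, SimpleGraph (Fin m) → Prop) {n : ℕ}
    (G : SimpleGraph (Fin n)) : Prop :=
  ∃ σ : Equiv.Perm (Fin n), ∀ (k : ℕ) (part : Fin n → Fin k),
    Monotone part → Function.Surjective part →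
    ∀ Mix : SimpleGraph (Fin n), IsMixSubgraph (G.comap σ) part Mix → C n Mix

section Helpers

open SimpleGraph

attribute [local instance] Classical.propDecidable

variable {n : ℕ}

lemma cliqueNum_bddAbove' {V : Type*} [Fintype V] (G : SimpleGraph V) :
    BddAbove {m | ∃ s, G.IsNClique m s} := by
  refine ⟨Fintype.card V, ?_⟩
  rintro b ⟨s, hs⟩
  rw [← hs.2]
  exact le_trans (Finset.card_le_univ s) (le_of_eq Finset.card_univ)

lemma le_cliqueNum' {V : Type*} [Fintype V] {G : SimpleGraph V} {m : ℕ} {s : Finset V}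
    (hs : G.IsNClique m s) : m ≤ G.cliqueNum :=
  le_csSup (cliqueNum_bddAbove' G) ⟨s, hs⟩

lemma cliqueNum_le' {V : Type*} [Fintype V] {G : SimpleGraph V} {b : ℕ}
    (h : ∀ m (s : Finset V), G.IsNClique m s → m ≤ b) : G.cliqueNum ≤ b := by
  refine csSup_le ⟨0, ∅, ?_⟩ ?_
  · simp
  · rintro m ⟨s, hs⟩; exact h m s hs

lemma exists_clique_of_le' {V : Type*} [Fintype V] {G : SimpleGraph V} {m : ℕ}
    (h : m ≤ G.cliqueNum) : ∃ s, G.IsNClique m s := by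
  obtain ⟨s, hs⟩ := G.exists_isNClique_cliqueNum
  obtain ⟨t, hts, htc⟩ := Finset.exists_subset_card_eq (hs.2 ▸ h)
  exact ⟨t, ⟨hs.1.subset (Finset.coe_subset.mpr hts), htc⟩⟩

lemma cliqueNum_mono' {V : Type*} [Fintype V] {G1 G2 : SimpleGraph V} (h : G1 ≤ G2) :
    G1.cliqueNum ≤ G2.cliqueNum :=
  cliqueNum_le' fun m s hs => le_cliqueNum' ⟨hs.1.mono h, hs.2⟩

lemma cliqueNum_le_card' {V : Type*} [Fintype V] (G : SimpleGraph V) :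
    G.cliqueNum ≤ Fintype.card V :=
  cliqueNum_le' fun m s hs => by
    rw [← hs.2]; exact le_trans (Finset.card_le_univ s) (le_of_eq Finset.card_univ)

lemma isNClique_image' {l : ℕ} {H : SimpleGraph (Fin n)} {ι : Fin l → Fin n}
    (hι : Function.Injective ι) {m : ℕ} {s : Finset (Fin l)}
    (hs : (H.comap ι).IsNClique m s) : H.IsNClique m (s.image ι) := by
  constructor
  · rintro x hx y hy hxy
    simp only [Finset.coe_image, Set.mem_image, Finset.mem_coe] at hx hy
    obtain ⟨a, ha, rfl⟩ := hx; obtain ⟨b, hb, rfl⟩ := hy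
    exact hs.1 ha hb fun hab => hxy (by rw [hab])
  · rw [Finset.card_image_of_injective _ hι, hs.2]

lemma adjMat_symm {n : ℕ} (H : SimpleGraph (Fin n)) (i j : Fin n) :
    adjMat H i j = adjMat H j i := by
  unfold adjMat
  by_cases h : i = j
  · subst h; rfl
  · rw [if_neg h, if_neg (Ne.symm h)]
    by_cases ha : H.Adj i j
    · rw [if_pos ha, if_pos ha.symm]
    · rw [if_neg ha, if_neg fun hb => ha hb.symm]

lemma adjMat_comap {l : ℕ} (H : SimpleGraph (Fin n)) (ι : Fin l → Fin n)
    (hι : Function.Injective ι) (i j : Fin l) :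
    adjMat (H.comap ι) i j = adjMat H (ι i) (ι j) := by
  unfold adjMat
  by_cases h : i = j
  · subst h; rw [if_pos rfl, if_pos rfl]
  · rw [if_neg h, if_neg fun hh => h (hι hh)]
    rfl

lemma adjMat_eq_one {n : ℕ} {H : SimpleGraph (Fin n)} {i j : Fin n}
    (h : adjMat H i j = 1) : i ≠ j ∧ H.Adj i j := by
  unfold adjMat at h
  by_cases hij : i = j
  · rw [if_pos hij] at h; exact absurd h (by decide)
  · rw [if_neg hij] at h
    by_cases ha : H.Adj i j
    · exact ⟨hij, ha⟩
    · rw [if_neg ha] at h; exact absurd h (by decide)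

lemma adjMat_adj {n : ℕ} {H : SimpleGraph (Fin n)} {i j : Fin n}
    (hne : i ≠ j) (h : H.Adj i j) : adjMat H i j = 1 := by
  unfold adjMat; rw [if_neg hne, if_pos h]

end Helpers
section Zones

open SimpleGraph

variable {n : ℕ}

lemma zoneHV_swap {M : Matrix (Fin n) (Fin n) (Fin 3)} (hM : ∀ i j, M i j = M j i)
    {R C : Fin n → Prop} : ZoneHorizontal M R C ↔ ZoneVertical M C R := by
  constructor
  · intro h j hj i i' hi hi'
    rw [hM i j, hM i' j]
    exact h j hj i i' hi hi'
  · intro h i hi j j' hj hj'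
    rw [hM i j, hM i j']
    exact h i hi j j' hj hj'

lemma zoneMixed_swap {M : Matrix (Fin n) (Fin n) (Fin 3)} (hM : ∀ i j, M i j = M j i)
    {R C : Fin n → Prop} (h : ZoneMixed M R C) : ZoneMixed M C R := by
  rcases h with ⟨h1, h2⟩ | ⟨⟨i, i', hi, hi', hii⟩, ⟨j, j', hj, hj', hjj⟩, ⟨a, b, ha, hb, hab⟩⟩
  · left
    constructor
    · intro hh; exact h2 ((zoneHV_swap hM).mp hh)
    · intro hh; exact h1 ((zoneHV_swap hM).mpr hh)
  · right
    exact ⟨⟨j, j', hj, hj', hjj⟩, ⟨i, i', hi, hi', hii⟩, ⟨b, a, hb, ha, by rw [hM b a]; exact hab⟩⟩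

def mixGraph {n k : ℕ} (H : SimpleGraph (Fin n)) (part : Fin n → Fin k) :
    SimpleGraph (Fin n) where
  Adj u v := H.Adj u v ∧ part u ≠ part v ∧
    ZoneMixed (adjMat H) (fun x => part x = part u) (fun y => part y = part v)
  symm := by
    constructor
    rintro u v ⟨h1, h2, h3⟩
    exact ⟨h1.symm, h2.symm, zoneMixed_swap (adjMat_symm H) h3⟩
  loopless := ⟨fun u h => H.loopless.irrefl u h.1⟩

lemma mixGraph_isMixSubgraph {n k : ℕ} (H : SimpleGraph (Fin n)) (part : Fin n → Fin k) :
    IsMixSubgraph H part (mixGraph H part) := fun _ _ => Iff.rfl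

lemma mixGraph_le {n k : ℕ} (H : SimpleGraph (Fin n)) (part : Fin n → Fin k) :
    mixGraph H part ≤ H := fun _ _ h => h.1

/-- The ordered mixed-extension property (no surjectivity requirement). -/
def OMP (C : ∀ m : ℕ, SimpleGraph (Fin m) → Prop) {n : ℕ} (H : SimpleGraph (Fin n)) : Prop :=
  ∀ (k : ℕ) (part : Fin n → Fin k), Monotone part →
    ∀ Mix : SimpleGraph (Fin n), IsMixSubgraph H part Mix → C n Mix

lemma isMixSubgraph_congr {n k k' : ℕ} {H : SimpleGraph (Fin n)} {part : Fin n → Fin k}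
    {part' : Fin n → Fin k'} (hcl : ∀ x y, part x = part y ↔ part' x = part' y)
    {Mix : SimpleGraph (Fin n)} (h : IsMixSubgraph H part Mix) :
    IsMixSubgraph H part' Mix := by
  intro u v
  rw [h u v]
  have e1 : (fun x => part' x = part' u) = (fun x => part x = part u) :=
    funext fun x => propext (hcl x u).symm
  have e2 : (fun y => part' y = part' v) = (fun y => part y = part v) :=
    funext fun y => propext (hcl y v).symm
  rw [e1, e2, show (part' u ≠ part' v) ↔ (part u ≠ part v) from not_congr (hcl u v).symm]

lemma omp_of_surjProp (C : ∀ m : ℕ, SimpleGraph (Fin m) → Prop) {n : ℕ}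
    (H : SimpleGraph (Fin n))
    (h : ∀ (k : ℕ) (part : Fin n → Fin k), Monotone part → Function.Surjective part →
      ∀ Mix : SimpleGraph (Fin n), IsMixSubgraph H part Mix → C n Mix) :
    OMP C H := by
  classical
  intro k part hmono Mix hMix
  set s : Finset (Fin k) := Finset.image part Finset.univ with hs
  have hmem : ∀ x, part x ∈ s := fun x => by simp [hs]
  set e := s.orderIsoOfFin rfl with he
  set part0 : Fin n → Fin s.card := fun x => e.symm ⟨part x, hmem x⟩ with hpart0
  have hcl : ∀ x y, part x = part y ↔ part0 x = part0 y := by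
    intro x y
    constructor
    · intro hxy
      simp only [hpart0]
      congr 1
      exact Subtype.ext hxy
    · intro hxy
      have := congrArg (fun t => ((e t : s) : Fin k)) hxy
      simpa [hpart0] using this
  have hmono0 : Monotone part0 := by
    intro x y hxy
    exact e.symm.monotone (Subtype.mk_le_mk.mpr (hmono hxy))
  have hsurj0 : Function.Surjective part0 := by
    intro j
    have hj : ((e j : s) : Fin k) ∈ Finset.image part Finset.univ := (e j).2
    simp only [Finset.mem_image, Finset.mem_univ, true_and] at hj
    obtain ⟨x, hx⟩ := hj
    exact ⟨x, (congrArg (⇑e.symm) (Subtype.ext hx)).trans (e.symm_apply_apply j)⟩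
  exact h s.card part0 hmono0 hsurj0 Mix (isMixSubgraph_congr hcl hMix)

end Zones
section Interval

open SimpleGraph

def iEmb (n p l : ℕ) (h : p + l ≤ n) : Fin l → Fin n :=
  fun i => ⟨p + i.val, by have := i.isLt; omega⟩

lemma iEmb_strictMono {n p l : ℕ} (h : p + l ≤ n) : StrictMono (iEmb n p l h) := by
  intro a b hab
  have hab' : a.val < b.val := hab
  simp only [iEmb, Fin.mk_lt_mk]
  omega

lemma iEmb_val {n p l : ℕ} (h : p + l ≤ n) (i : Fin l) : (iEmb n p l h i).val = p + i.val := rfl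

lemma zoneH_transfer {n l : ℕ} (H : SimpleGraph (Fin n)) (ι : Fin l → Fin n)
    (hι : Function.Injective ι) (R' C' : Fin l → Prop) (R C : Fin n → Prop)
    (hR : ∀ x, R x ↔ ∃ i, R' i ∧ ι i = x) (hC : ∀ y, C y ↔ ∃ j, C' j ∧ ι j = y) :
    ZoneHorizontal (adjMat H) R C ↔ ZoneHorizontal (adjMat (H.comap ι)) R' C' := by
  constructor
  · intro h i hi j j' hj hj'
    rw [adjMat_comap H ι hι, adjMat_comap H ι hι]
    exact h (ι i) ((hR _).mpr ⟨i, hi, rfl⟩) (ι j) (ι j')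
      ((hC _).mpr ⟨j, hj, rfl⟩) ((hC _).mpr ⟨j', hj', rfl⟩)
  · intro h x hx y y' hy hy'
    obtain ⟨i, hi, rfl⟩ := (hR x).mp hx
    obtain ⟨j, hj, rfl⟩ := (hC y).mp hy
    obtain ⟨j', hj', rfl⟩ := (hC y').mp hy'
    rw [← adjMat_comap H ι hι, ← adjMat_comap H ι hι]
    exact h i hi j j' hj hj'

lemma zoneV_transfer {n l : ℕ} (H : SimpleGraph (Fin n)) (ι : Fin l → Fin n)
    (hι : Function.Injective ι) (R' C' : Fin l → Prop) (R C : Fin n → Prop)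
    (hR : ∀ x, R x ↔ ∃ i, R' i ∧ ι i = x) (hC : ∀ y, C y ↔ ∃ j, C' j ∧ ι j = y) :
    ZoneVertical (adjMat H) R C ↔ ZoneVertical (adjMat (H.comap ι)) R' C' := by
  constructor
  · intro h j hj i i' hi hi'
    rw [adjMat_comap H ι hι, adjMat_comap H ι hι]
    exact h (ι j) ((hC _).mpr ⟨j, hj, rfl⟩) (ι i) (ι i')
      ((hR _).mpr ⟨i, hi, rfl⟩) ((hR _).mpr ⟨i', hi', rfl⟩)
  · intro h y hy x x' hx hx'
    obtain ⟨j, hj, rfl⟩ := (hC y).mp hy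
    obtain ⟨i, hi, rfl⟩ := (hR x).mp hx
    obtain ⟨i', hi', rfl⟩ := (hR x').mp hx'
    rw [← adjMat_comap H ι hι, ← adjMat_comap H ι hι]
    exact h j hj i i' hi hi'

lemma zoneMixed_transfer {n l : ℕ} (H : SimpleGraph (Fin n)) (ι : Fin l → Fin n)
    (hι : Function.Injective ι) (R' C' : Fin l → Prop) (R C : Fin n → Prop)
    (hR : ∀ x, R x ↔ ∃ i, R' i ∧ ι i = x) (hC : ∀ y, C y ↔ ∃ j, C' j ∧ ι j = y) :
    ZoneMixed (adjMat H) R C ↔ ZoneMixed (adjMat (H.comap ι)) R' C' := by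
  unfold ZoneMixed
  rw [zoneH_transfer H ι hι R' C' R C hR hC, zoneV_transfer H ι hι R' C' R C hR hC]
  constructor
  · rintro (h | ⟨⟨x, x', hx, hx', hxx⟩, ⟨y, y', hy, hy', hyy⟩, ⟨a, b, ha, hb, hab⟩⟩)
    · exact Or.inl h
    · obtain ⟨i, hi, rfl⟩ := (hR x).mp hx
      obtain ⟨i', hi', rfl⟩ := (hR x').mp hx'
      obtain ⟨j, hj, rfl⟩ := (hC y).mp hy
      obtain ⟨j', hj', rfl⟩ := (hC y').mp hy'
      obtain ⟨a0, ha0, rfl⟩ := (hR a).mp ha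
      obtain ⟨b0, hb0, rfl⟩ := (hC b).mp hb
      refine Or.inr ⟨⟨i, i', hi, hi', fun hh => hxx (by rw [hh])⟩,
        ⟨j, j', hj, hj', fun hh => hyy (by rw [hh])⟩,
        ⟨a0, b0, ha0, hb0, ?_⟩⟩
      rw [adjMat_comap H ι hι]; exact hab
  · rintro (h | ⟨⟨i, i', hi, hi', hii⟩, ⟨j, j', hj, hj', hjj⟩, ⟨a, b, ha, hb, hab⟩⟩)
    · exact Or.inl h
    · refine Or.inr ⟨⟨ι i, ι i', (hR _).mpr ⟨i, hi, rfl⟩, (hR _).mpr ⟨i', hi', rfl⟩,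
        fun hh => hii (hι hh)⟩,
        ⟨ι j, ι j', (hC _).mpr ⟨j, hj, rfl⟩, (hC _).mpr ⟨j', hj', rfl⟩,
        fun hh => hjj (hι hh)⟩,
        ⟨ι a, ι b, (hR _).mpr ⟨a, ha, rfl⟩, (hC _).mpr ⟨b, hb, rfl⟩, ?_⟩⟩
      rw [← adjMat_comap H ι hι]; exact hab

lemma omp_comap_interval (C : ∀ m : ℕ, SimpleGraph (Fin m) → Prop)
    (hhered : ∀ (m l : ℕ) (g : Fin l → Fin m), StrictMono g →
      ∀ H : SimpleGraph (Fin m), C m H → C l (H.comap g))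
    {n : ℕ} (H : SimpleGraph (Fin n)) (hH : OMP C H) (p l : ℕ) (hpl : p + l ≤ n) :
    OMP C (H.comap (iEmb n p l hpl)) := by
  classical
  intro k part' hmono' Mix' hMix'
  set ι : Fin l → Fin n := iEmb n p l hpl with hιdef
  have hιinj : Function.Injective ι := (iEmb_strictMono hpl).injective
  -- numeric version of part'
  set pv : ℕ → ℕ := fun d => if hd : d < l then (part' ⟨d, hd⟩).val else 0 with hpv
  have hpv_lt : ∀ d, pv d < k + 1 := by
    intro d
    simp only [hpv]
    split
    · exact Nat.lt_succ_of_lt (part' _).isLt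
    · omega
  have hpv_at : ∀ (i : Fin l), pv i.val = (part' i).val := by
    intro i
    simp only [hpv, dif_pos i.isLt]
  -- the extended partition
  set pext : Fin n → Fin (k + 2) := fun x =>
    if x.val < p then ⟨0, by omega⟩
    else if x.val < p + l then ⟨pv (x.val - p) + 1, by have := hpv_lt (x.val - p); omega⟩
    else ⟨k + 1, by omega⟩ with hpext
  have hpext_val : ∀ x : Fin n, (pext x).val =
      (if x.val < p then 0 else if x.val < p + l then pv (x.val - p) + 1 else k + 1) := by
    intro x
    simp only [hpext]
    split
    · rfl
    · split <;> rfl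
  have hmid : ∀ u : Fin l, (pext (ι u)).val = (part' u).val + 1 := by
    intro u
    have h1 : (ι u).val = p + u.val := rfl
    rw [hpext_val, h1, if_neg (by omega), if_pos (by have := u.isLt; omega)]
    have : p + u.val - p = u.val := by omega
    rw [this, hpv_at u]
  have hclass : ∀ (u : Fin l) (x : Fin n),
      (pext x = pext (ι u)) ↔ ∃ i, (part' i = part' u) ∧ ι i = x := by
    intro u x
    rw [Fin.ext_iff, hmid u, hpext_val]
    by_cases h1 : x.val < p
    · rw [if_pos h1]
      constructor
      · omega
      · rintro ⟨i, _, rfl⟩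
        have : (ι i).val = p + i.val := rfl
        omega
    · by_cases h2 : x.val < p + l
      · rw [if_neg h1, if_pos h2]
        have hd : x.val - p < l := by omega
        constructor
        · intro hh
          refine ⟨⟨x.val - p, hd⟩, ?_, ?_⟩
          · have := hpv_at ⟨x.val - p, hd⟩
            simp only at this
            rw [Fin.ext_iff]
            omega
          · apply Fin.ext
            show p + (x.val - p) = x.val
            omega
        · rintro ⟨i, hpi, rfl⟩
          have hiv : (ι i).val = p + i.val := rfl
          rw [show (ι i).val - p = i.val from by omega]
          have := hpv_at i
          rw [Fin.ext_iff] at hpi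
          omega
      · rw [if_neg h1, if_neg h2]
        constructor
        · have := (part' u).isLt
          omega
        · rintro ⟨i, _, rfl⟩
          have : (ι i).val = p + i.val := rfl
          have := i.isLt
          omega
  have hmonoext : Monotone pext := by
    intro x y hxy
    have hxy' : x.val ≤ y.val := hxy
    rw [Fin.le_def, hpext_val, hpext_val]
    by_cases hx1 : x.val < p
    · rw [if_pos hx1]; omega
    · rw [if_neg hx1, if_neg (show ¬ y.val < p by omega)]
      by_cases hx2 : x.val < p + l
      · rw [if_pos hx2]
        by_cases hy2 : y.val < p + l
        · rw [if_pos hy2]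
          have hdx : x.val - p < l := by omega
          have hdy : y.val - p < l := by omega
          have hmle : part' ⟨x.val - p, hdx⟩ ≤ part' ⟨y.val - p, hdy⟩ :=
            hmono' (by rw [Fin.mk_le_mk]; omega)
          have e1 := hpv_at ⟨x.val - p, hdx⟩
          have e2 := hpv_at ⟨y.val - p, hdy⟩
          simp only at e1 e2
          rw [Fin.le_def] at hmle
          omega
        · rw [if_neg hy2]
          have := hpv_lt (x.val - p)
          omega
      · rw [if_neg hx2, if_neg (show ¬ y.val < p + l by omega)]
  set Mix : SimpleGraph (Fin n) := mixGraph H pext with hMixdef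
  have hCMix : C n Mix := hH (k + 2) pext hmonoext Mix (mixGraph_isMixSubgraph H pext)
  have hCres : C l (Mix.comap ι) := hhered n l ι (iEmb_strictMono hpl) Mix hCMix
  have hMixeq : Mix' = Mix.comap ι := by
    ext u v
    rw [hMix' u v]
    show _ ↔ Mix.Adj (ι u) (ι v)
    have hadj : (H.comap ι).Adj u v ↔ H.Adj (ι u) (ι v) := Iff.rfl
    have hne : (part' u ≠ part' v) ↔ (pext (ι u) ≠ pext (ι v)) := by
      apply not_congr
      rw [Fin.ext_iff, Fin.ext_iff, hmid u, hmid v]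
      omega
    have hz := zoneMixed_transfer H ι hιinj
      (fun i => part' i = part' u) (fun j => part' j = part' v)
      (fun x => pext x = pext (ι u)) (fun y => pext y = pext (ι v))
      (hclass u) (hclass v)
    constructor
    · rintro ⟨h1, h2, h3⟩
      exact ⟨h1, hne.mp h2, hz.mpr h3⟩
    · rintro ⟨h1, h2, h3⟩
      exact ⟨h1, hne.mpr h2, hz.mp h3⟩
  rw [hMixeq]
  exact hCres

end Interval
section Greedy

open SimpleGraph

attribute [local instance] Classical.propDecidable

variable {n : ℕ}

/-- The interval `[p, q)` is nonempty, within range, and has clique number at most `w`. -/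
def Pgood (H : SimpleGraph (Fin n)) (w p q : ℕ) : Prop :=
  ∃ h : p < q ∧ q ≤ n, (H.comap (iEmb n p (q - p) (by omega))).cliqueNum ≤ w

noncomputable def fg (H : SimpleGraph (Fin n)) (w p : ℕ) : ℕ :=
  Nat.findGreatest (Pgood H w p) n

noncomputable def nxt (H : SimpleGraph (Fin n)) (w p : ℕ) : ℕ :=
  if p < n then (if fg H w p < n then fg H w p + 1 else n) else n

noncomputable def cuts (H : SimpleGraph (Fin n)) (w : ℕ) : ℕ → ℕ
  | 0 => 0
  | s + 1 => nxt H w (cuts H w s)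

variable {H : SimpleGraph (Fin n)} {w : ℕ}

lemma Pgood_self (hw : 1 ≤ w) {p : ℕ} (hp : p < n) : Pgood H w p (p + 1) := by
  refine ⟨⟨Nat.lt_succ_self p, hp⟩, ?_⟩
  refine le_trans (cliqueNum_le_card' _) ?_
  rw [Fintype.card_fin]
  omega

lemma fg_spec (hw : 1 ≤ w) {p : ℕ} (hp : p < n) : Pgood H w p (fg H w p) :=
  Nat.findGreatest_spec (show p + 1 ≤ n from hp) (Pgood_self hw hp)

lemma fg_lt (hw : 1 ≤ w) {p : ℕ} (hp : p < n) : p < fg H w p := (fg_spec hw hp).1.1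

lemma fg_le_n (hw : 1 ≤ w) {p : ℕ} (hp : p < n) : fg H w p ≤ n := (fg_spec hw hp).1.2

lemma fg_cliqueNum (hw : 1 ≤ w) {p : ℕ} (hp : p < n)
    (hle : p + (fg H w p - p) ≤ n) :
    (H.comap (iEmb n p (fg H w p - p) hle)).cliqueNum ≤ w := (fg_spec hw hp).2

lemma fg_max (hw : 1 ≤ w) {p : ℕ} (hp : p < n) (hfg : fg H w p < n)
    (hle : p + (fg H w p + 1 - p) ≤ n) :
    w + 1 ≤ (H.comap (iEmb n p (fg H w p + 1 - p) hle)).cliqueNum := by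
  have hmax := Nat.findGreatest_is_greatest (Nat.lt_succ_self (fg H w p))
    (show fg H w p + 1 ≤ n from hfg)
  by_contra hcon
  push_neg at hcon
  exact hmax ⟨⟨lt_trans (fg_lt hw hp) (Nat.lt_succ_self _), hfg⟩,
    show (H.comap (iEmb n p (fg H w p + 1 - p) hle)).cliqueNum ≤ w by omega⟩

lemma cuts_le_n (hw : 1 ≤ w) : ∀ s, cuts H w s ≤ n := by
  intro s
  induction s with
  | zero => exact Nat.zero_le n
  | succ s ih =>
    show nxt H w (cuts H w s) ≤ n
    unfold nxt
    split
    · split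
      · omega
      · exact le_refl n
    · exact le_refl n

lemma nxt_gt (hw : 1 ≤ w) {p : ℕ} (hp : p < n) : p < nxt H w p := by
  unfold nxt
  rw [if_pos hp]
  split
  · exact lt_trans (fg_lt hw hp) (Nat.lt_succ_self _)
  · exact hp

lemma cuts_mono (hw : 1 ≤ w) : Monotone (cuts H w) := by
  apply monotone_nat_of_le_succ
  intro s
  by_cases h : cuts H w s < n
  · exact le_of_lt (nxt_gt hw h)
  · have : cuts H w s = n := le_antisymm (cuts_le_n hw s) (by omega)
    show cuts H w s ≤ nxt H w (cuts H w s)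
    unfold nxt
    rw [if_neg h]
    omega

lemma cuts_ge_self (hw : 1 ≤ w) : ∀ s, cuts H w s < n → s ≤ cuts H w s := by
  intro s
  induction s with
  | zero => intro _; exact Nat.zero_le _
  | succ s ih =>
    intro h
    have hs : cuts H w s < n := by
      by_contra hc
      have : cuts H w s = n := le_antisymm (cuts_le_n hw s) (by omega)
      have : cuts H w (s + 1) = n := by
        show nxt H w (cuts H w s) = n
        unfold nxt
        rw [if_neg (by omega)]
      omega
    have h2 : cuts H w s < nxt H w (cuts H w s) := nxt_gt hw hs
    have := ih hs
    show s + 1 ≤ nxt H w (cuts H w s)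
    omega

noncomputable def blk (H : SimpleGraph (Fin n)) (w : ℕ) (v : Fin n) : ℕ :=
  Nat.findGreatest (fun s => cuts H w s ≤ v.val) n

lemma blk_le (v : Fin n) : cuts H w (blk H w v) ≤ v.val :=
  Nat.findGreatest_spec (P := fun s => cuts H w s ≤ v.val) (Nat.zero_le n) (Nat.zero_le _)

lemma blk_lt_n (hw : 1 ≤ w) (v : Fin n) : blk H w v < n := by
  have h1 : cuts H w (blk H w v) < n := lt_of_le_of_lt (blk_le v) v.isLt
  exact lt_of_le_of_lt (le_trans (cuts_ge_self hw _ h1) (blk_le v)) v.isLt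

lemma blk_lt (hw : 1 ≤ w) (v : Fin n) : v.val < cuts H w (blk H w v + 1) := by
  by_contra hc
  push_neg at hc
  have h2 : blk H w v + 1 ≤ blk H w v :=
    Nat.le_findGreatest (show blk H w v + 1 ≤ n from blk_lt_n hw v) hc
  omega

lemma blk_eq_iff (hw : 1 ≤ w) {x : Fin n} {s : ℕ} :
    blk H w x = s ↔ cuts H w s ≤ x.val ∧ x.val < cuts H w (s + 1) := by
  constructor
  · rintro rfl
    exact ⟨blk_le x, blk_lt hw x⟩
  · rintro ⟨h1, h2⟩
    have hsn : s ≤ n := by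
      have hcs : cuts H w s < n := lt_of_le_of_lt h1 x.isLt
      exact le_of_lt (lt_of_le_of_lt (le_trans (cuts_ge_self hw s hcs) h1) x.isLt)
    refine le_antisymm ?_ (Nat.le_findGreatest hsn h1)
    by_contra hc
    push_neg at hc
    have hm2 : cuts H w (s + 1) ≤ cuts H w (blk H w x) := cuts_mono hw hc
    have hm3 : cuts H w (blk H w x) ≤ x.val := blk_le x
    omega

lemma blk_mono (hw : 1 ≤ w) {x y : Fin n} (hxy : x ≤ y) : blk H w x ≤ blk H w y := by
  have h1 : cuts H w (blk H w x) ≤ y.val := le_trans (blk_le x) hxy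
  exact Nat.le_findGreatest (le_of_lt (blk_lt_n hw x)) h1

end Greedy
section Main

open SimpleGraph

attribute [local instance] Classical.propDecidable

variable {n : ℕ}

lemma block_bigclique {H : SimpleGraph (Fin n)} {w : ℕ} (hw : 1 ≤ w) {s : ℕ}
    (hs : cuts H w (s + 1) < n) :
    ∃ K : Finset (Fin n), H.IsNClique (w + 1) K ∧ ∀ x ∈ K, blk H w x = s := by
  have hrec : cuts H w (s + 1) = nxt H w (cuts H w s) := rfl
  have hp : cuts H w s < n := by
    by_contra hc
    have : nxt H w (cuts H w s) = n := by unfold nxt; rw [if_neg hc]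
    omega
  have hq : fg H w (cuts H w s) < n := by
    by_contra hc
    have : nxt H w (cuts H w s) = n := by unfold nxt; rw [if_pos hp, if_neg hc]
    omega
  have hcuteq : cuts H w (s + 1) = fg H w (cuts H w s) + 1 := by
    rw [hrec]; unfold nxt; rw [if_pos hp, if_pos hq]
  set p := cuts H w s with hpdef
  set q := fg H w p with hqdef
  have hpq : p < q := fg_lt hw hp
  have hle : p + (q + 1 - p) ≤ n := by omega
  have hbig : w + 1 ≤ (H.comap (iEmb n p (q + 1 - p) hle)).cliqueNum := fg_max hw hp hq hle
  obtain ⟨K', hK'⟩ := exists_clique_of_le' hbig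
  refine ⟨K'.image (iEmb n p (q + 1 - p) hle),
    isNClique_image' (iEmb_strictMono hle).injective hK', ?_⟩
  intro x hx
  simp only [Finset.mem_image] at hx
  obtain ⟨i, _, rfl⟩ := hx
  have hiv : (iEmb n p (q + 1 - p) hle i).val = p + i.val := rfl
  have hib := i.isLt
  rw [blk_eq_iff hw]
  constructor
  · omega
  · omega

def cfun (f : ℕ → ℕ) : ℕ → ℕ
  | 0 => 0
  | m + 1 => (cfun f m + 1) * f (m + 1) + cfun f m + 1

lemma enc_lemma {a x y r s : ℕ} (hr : r < a) (hs : s < a) (h : a * x + r = a * y + s) :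
    x = y ∧ r = s := by
  have hxy : x = y := by
    have h1 : (a * x + r) / a = (a * y + s) / a := by rw [h]
    rwa [Nat.mul_add_div (by omega), Nat.mul_add_div (by omega),
      Nat.div_eq_of_lt hr, Nat.div_eq_of_lt hs, Nat.add_zero, Nat.add_zero] at h1
  subst hxy
  exact ⟨rfl, by omega⟩

lemma main_lemma (C : ∀ m : ℕ, SimpleGraph (Fin m) → Prop)
    (hhered : ∀ (m l : ℕ) (g : Fin l → Fin m), StrictMono g →
      ∀ H : SimpleGraph (Fin m), C m H → C l (H.comap g))
    (f : ℕ → ℕ) (hf : Monotone f)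
    (hchi : ∀ (m : ℕ) (H : SimpleGraph (Fin m)), C m H →
      H.Colorable (f H.cliqueNum)) :
    ∀ (w n : ℕ) (H : SimpleGraph (Fin n)), OMP C H → H.cliqueNum ≤ w →
      H.Colorable (cfun f w) := by
  intro w
  induction w with
  | zero =>
    intro n H _ hcl
    rw [SimpleGraph.colorable_iff_exists_bdd_nat_coloring]
    have hfalse : ∀ _v : Fin n, False := by
      intro v
      have h1 : H.IsNClique 1 {v} := SimpleGraph.isNClique_singleton.mpr rfl
      have := le_cliqueNum' h1
      omega
    exact ⟨SimpleGraph.Coloring.mk (fun _ => 0) (fun {u v} _ => (hfalse u).elim),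
      fun v => (hfalse v).elim⟩
  | succ m ih =>
    intro n H hOMP hcl
    by_cases hm : m = 0
    · subst hm
      rw [SimpleGraph.colorable_iff_exists_bdd_nat_coloring]
      have hnoedge : ∀ u v : Fin n, ¬ H.Adj u v := by
        intro u v huv
        have hne := H.ne_of_adj huv
        have h2 : H.IsNClique 2 {u, v} := by
          constructor
          · intro x hx y hy hxy
            simp only [Finset.coe_insert, Set.mem_insert_iff, Finset.coe_singleton,
              Set.mem_singleton_iff] at hx hy
            rcases hx with rfl | rfl <;> rcases hy with rfl | rfl
            · exact absurd rfl hxy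
            · exact huv
            · exact huv.symm
            · exact absurd rfl hxy
          · rw [Finset.card_insert_of_notMem (by simp [hne]), Finset.card_singleton]
        have := le_cliqueNum' h2
        omega
      refine ⟨SimpleGraph.Coloring.mk (fun _ => 0) (fun {u v} huv => (hnoedge u v huv).elim),
        fun v => ?_⟩
      show 0 < cfun f 1
      have h : cfun f 1 = 1 * f 1 + 0 + 1 := rfl
      omega
    · -- the real construction
      have hw : 1 ≤ m := Nat.one_le_iff_ne_zero.mpr hm
      -- the partition into blocks
      set part : Fin n → Fin n := fun v => ⟨blk H m v, blk_lt_n hw v⟩ with hpartdef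
      have hpartmono : Monotone part := by
        intro x y hxy
        exact blk_mono hw hxy
      set Mix : SimpleGraph (Fin n) := mixGraph H part with hMixdef
      have hCMix : C n Mix := hOMP n part hpartmono Mix (mixGraph_isMixSubgraph H part)
      have hMixcol : Mix.Colorable (f (m + 1)) :=
        (hchi n Mix hCMix).mono (hf (le_trans (cliqueNum_mono' (mixGraph_le H part)) hcl))
      obtain ⟨Φ, hΦ⟩ := (SimpleGraph.colorable_iff_exists_bdd_nat_coloring _).mp hMixcol
      -- colorings of the initial parts of blocks, via the induction hypothesis
      have hblockcolor : ∀ s : ℕ, ∀ hs : cuts H m s < n,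
          ∃ g : Fin (fg H m (cuts H m s) - cuts H m s) → ℕ,
            (∀ i, g i < cfun f m) ∧
            (∀ i j, (H.comap (iEmb n (cuts H m s) (fg H m (cuts H m s) - cuts H m s)
              (by have h1 : fg H m (cuts H m s) ≤ n := fg_le_n hw hs
                  have h2 : cuts H m s < fg H m (cuts H m s) := fg_lt hw hs; omega))).Adj i j →
              g i ≠ g j) := by
        intro s hs
        have hle : cuts H m s + (fg H m (cuts H m s) - cuts H m s) ≤ n := by
          have h1 : fg H m (cuts H m s) ≤ n := fg_le_n hw hs
          have h2 : cuts H m s < fg H m (cuts H m s) := fg_lt hw hs; omega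
        have hOMPsub : OMP C (H.comap (iEmb n (cuts H m s) _ hle)) :=
          omp_comap_interval C hhered H hOMP _ _ hle
        have hclsub : (H.comap (iEmb n (cuts H m s) _ hle)).cliqueNum ≤ m :=
          fg_cliqueNum hw hs hle
        obtain ⟨g, hg⟩ :=
          (SimpleGraph.colorable_iff_exists_bdd_nat_coloring _).mp (ih _ _ hOMPsub hclsub)
        exact ⟨g, fun i => hg i, fun i j hij => g.valid hij⟩
      choose g hg1 hg2 using hblockcolor
      -- a total version of the block colorings
      set gtot : ℕ → ℕ → ℕ := fun s d =>
        if h : cuts H m s < n ∧ d < fg H m (cuts H m s) - cuts H m s then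
          g s h.1 ⟨d, h.2⟩ else 0 with hgtotdef
      have hgtot_lt_good : ∀ s d (hs : cuts H m s < n)
          (hd : d < fg H m (cuts H m s) - cuts H m s), gtot s d < cfun f m := by
        intro s d hs hd
        simp only [hgtotdef]
        rw [dif_pos ⟨hs, hd⟩]
        exact hg1 s hs _
      have hgtot_le : ∀ s d, gtot s d ≤ cfun f m := by
        intro s d
        simp only [hgtotdef]
        split
        · exact le_of_lt (hg1 _ _ _)
        · exact Nat.zero_le _
      have hgtot_ne : ∀ (s : ℕ) (hs : cuts H m s < n) (d e : ℕ)
          (hd : d < fg H m (cuts H m s) - cuts H m s)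
          (he : e < fg H m (cuts H m s) - cuts H m s)
          (x y : Fin n), x.val = cuts H m s + d → y.val = cuts H m s + e → H.Adj x y →
          gtot s d ≠ gtot s e := by
        intro s hs d e hd he x y hx hy hxy
        have hle : cuts H m s + (fg H m (cuts H m s) - cuts H m s) ≤ n := by
          have h1 : fg H m (cuts H m s) ≤ n := fg_le_n hw hs
          have h2 : cuts H m s < fg H m (cuts H m s) := fg_lt hw hs; omega
        have hadj : (H.comap (iEmb n (cuts H m s) (fg H m (cuts H m s) - cuts H m s)
            hle)).Adj ⟨d, hd⟩ ⟨e, he⟩ := by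
          show H.Adj (iEmb n (cuts H m s) _ hle ⟨d, hd⟩) (iEmb n (cuts H m s) _ hle ⟨e, he⟩)
          have e1 : iEmb n (cuts H m s) _ hle ⟨d, hd⟩ = x :=
            Fin.ext (show cuts H m s + d = x.val by omega)
          have e2 : iEmb n (cuts H m s) _ hle ⟨e, he⟩ = y :=
            Fin.ext (show cuts H m s + e = y.val by omega)
          rw [e1, e2]
          exact hxy
        have hne := hg2 s hs ⟨d, hd⟩ ⟨e, he⟩ hadj
        simp only [hgtotdef]
        rw [dif_pos ⟨hs, hd⟩, dif_pos ⟨hs, he⟩]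
        exact hne
      -- within-block coloring
      set Ψ : Fin n → ℕ := fun v =>
        if v.val < fg H m (cuts H m (blk H m v)) then
          gtot (blk H m v) (v.val - cuts H m (blk H m v))
        else cfun f m with hΨdef
      have hΨle : ∀ v, Ψ v ≤ cfun f m := by
        intro v
        simp only [hΨdef]
        split
        · exact hgtot_le _ _
        · exact le_refl _
      have hΨlt : ∀ v, Ψ v < cfun f m + 1 := fun v => Nat.lt_succ_of_le (hΨle v)
      -- same-block adjacent vertices get different Ψ
      have hsame : ∀ u v : Fin n, H.Adj u v → blk H m u = blk H m v → Ψ u ≠ Ψ v := by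
        intro u v huv hb
        have hpu : cuts H m (blk H m v) ≤ u.val := by
          have := blk_le (H := H) (w := m) u; rwa [hb] at this
        have hpv : cuts H m (blk H m v) ≤ v.val := blk_le v
        have hqu : u.val < cuts H m (blk H m v + 1) := by
          have h0 : u.val < cuts H m (blk H m u + 1) := blk_lt hw u
          rwa [hb] at h0
        have hqv : v.val < cuts H m (blk H m v + 1) := blk_lt hw v
        have hpn : cuts H m (blk H m v) < n := lt_of_le_of_lt hpv v.isLt
        have hrec : cuts H m (blk H m v + 1) = nxt H m (cuts H m (blk H m v)) := rfl
        have hnx : cuts H m (blk H m v + 1) =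
            (if fg H m (cuts H m (blk H m v)) < n then fg H m (cuts H m (blk H m v)) + 1
             else n) := by
          rw [hrec]; unfold nxt; rw [if_pos hpn]
        have hfgle : fg H m (cuts H m (blk H m v)) ≤ n := fg_le_n hw hpn
        have hub : u.val ≤ fg H m (cuts H m (blk H m v)) := by
          by_cases hc : fg H m (cuts H m (blk H m v)) < n
          · rw [if_pos hc] at hnx; omega
          · rw [if_neg hc] at hnx; omega
        have hvb : v.val ≤ fg H m (cuts H m (blk H m v)) := by
          by_cases hc : fg H m (cuts H m (blk H m v)) < n
          · rw [if_pos hc] at hnx; omega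
          · rw [if_neg hc] at hnx; omega
        simp only [hΨdef]
        rw [hb]
        by_cases hcu : u.val < fg H m (cuts H m (blk H m v))
        · by_cases hcv : v.val < fg H m (cuts H m (blk H m v))
          · rw [if_pos hcu, if_pos hcv]
            exact hgtot_ne (blk H m v) hpn _ _ (by omega) (by omega) u v
              (by omega) (by omega) huv
          · rw [if_pos hcu, if_neg hcv]
            exact Nat.ne_of_lt (hgtot_lt_good _ _ hpn (by omega))
        · by_cases hcv : v.val < fg H m (cuts H m (blk H m v))
          · rw [if_neg hcu, if_pos hcv]
            exact (Nat.ne_of_lt (hgtot_lt_good _ _ hpn (by omega))).symm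
          · exact absurd (Fin.ext (show u.val = v.val by omega)) (H.ne_of_adj huv)
      -- cross-block edges between two non-final blocks are Mix edges
      have hcross : ∀ u v : Fin n, H.Adj u v → blk H m u ≠ blk H m v →
          cuts H m (blk H m u + 1) < n → cuts H m (blk H m v + 1) < n → Mix.Adj u v := by
        intro u v huv hbne hlu hlv
        show H.Adj u v ∧ part u ≠ part v ∧
          ZoneMixed (adjMat H) (fun x => part x = part u) (fun y => part y = part v)
        refine ⟨huv, fun h => hbne (congrArg Fin.val h), ?_⟩
        by_contra hzone
        have hz1 : ¬(¬ ZoneHorizontal (adjMat H) (fun x => part x = part u)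
            (fun y => part y = part v) ∧ ¬ ZoneVertical (adjMat H) (fun x => part x = part u)
            (fun y => part y = part v)) := fun hA => hzone (Or.inl hA)
        rcases not_and_or.mp hz1 with hHor | hVer
        · have hhor := not_not.mp hHor
          obtain ⟨K, hK, hKblk⟩ := block_bigclique hw hlv
          have hKadj : ∀ x ∈ K, H.Adj u x := by
            intro x hx
            have hxpart : part x = part v := by
              apply Fin.ext
              show blk H m x = blk H m v
              exact hKblk x hx
            have h1 : adjMat H u x = adjMat H u v := hhor u rfl x v hxpart rfl
            have h2 : adjMat H u v = 1 := adjMat_adj (H.ne_of_adj huv) huv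
            exact (adjMat_eq_one (h1.trans h2)).2
          have hunotin : u ∉ K := fun hu => hbne (hKblk u hu)
          have hbigK : H.IsNClique (m + 1 + 1) (insert u K) := hK.insert hKadj
          have := le_cliqueNum' hbigK
          omega
        · have hver := not_not.mp hVer
          obtain ⟨K, hK, hKblk⟩ := block_bigclique hw hlu
          have hKadj : ∀ x ∈ K, H.Adj v x := by
            intro x hx
            have hxpart : part x = part u := by
              apply Fin.ext
              show blk H m x = blk H m u
              exact hKblk x hx
            have h1 : adjMat H x v = adjMat H u v := hver v rfl x u hxpart rfl
            have h2 : adjMat H u v = 1 := adjMat_adj (H.ne_of_adj huv) huv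
            exact ((adjMat_eq_one (h1.trans h2)).2).symm
          have hvnotin : v ∉ K := fun hv => hbne ((hKblk v hv).symm)
          have hbigK : H.IsNClique (m + 1 + 1) (insert v K) := hK.insert hKadj
          have := le_cliqueNum' hbigK
          omega
      -- there is at most one final block
      have hlastuniq : ∀ u v : Fin n, blk H m u ≠ blk H m v →
          cuts H m (blk H m u + 1) = n → cuts H m (blk H m v + 1) = n → False := by
        intro u v hne h1 h2
        have hu := u.isLt
        have hv := v.isLt
        rcases Nat.lt_or_ge (blk H m u) (blk H m v) with h | h
        · have hmono : cuts H m (blk H m u + 1) ≤ cuts H m (blk H m v) := cuts_mono hw h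
          have h3 : cuts H m (blk H m v) ≤ v.val := blk_le v
          omega
        · have hlt : blk H m v + 1 ≤ blk H m u := by omega
          have hmono : cuts H m (blk H m v + 1) ≤ cuts H m (blk H m u) := cuts_mono hw hlt
          have h3 : cuts H m (blk H m u) ≤ u.val := blk_le u
          omega
      -- the final coloring
      set col : Fin n → ℕ := fun v =>
        if cuts H m (blk H m v + 1) = n then (cfun f m + 1) * f (m + 1) + Ψ v
        else (cfun f m + 1) * Φ v + Ψ v with hcoldef
      have hmuldistrib : ∀ z : ℕ, (cfun f m + 1) * (z + 1) = (cfun f m + 1) * z + (cfun f m + 1) :=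
        fun z => by ring
      have hcolnormal_lt : ∀ v : Fin n, ¬ (cuts H m (blk H m v + 1) = n) →
          col v < (cfun f m + 1) * f (m + 1) := by
        intro v hv
        simp only [hcoldef]
        rw [if_neg hv]
        have h2 : Φ v + 1 ≤ f (m + 1) := hΦ v
        have h4 : (cfun f m + 1) * (Φ v + 1) ≤ (cfun f m + 1) * f (m + 1) :=
          Nat.mul_le_mul_left _ h2
        have h5 := hmuldistrib (Φ v)
        have h6 := hΨle v
        omega
      rw [SimpleGraph.colorable_iff_exists_bdd_nat_coloring]
      refine ⟨SimpleGraph.Coloring.mk col ?_, ?_⟩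
      · intro u v huv
        by_cases hb : blk H m u = blk H m v
        · have hΨne := hsame u v huv hb
          simp only [hcoldef]
          rw [hb]
          by_cases hl : cuts H m (blk H m v + 1) = n
          · rw [if_pos hl, if_pos hl]
            omega
          · rw [if_neg hl, if_neg hl]
            intro hcontra
            exact hΨne (enc_lemma (hΨlt u) (hΨlt v) hcontra).2
        · by_cases hlu : cuts H m (blk H m u + 1) = n
          · by_cases hlv : cuts H m (blk H m v + 1) = n
            · exact (hlastuniq u v hb hlu hlv).elim
            · have h1 := hcolnormal_lt v hlv
              have h2 : col u = (cfun f m + 1) * f (m + 1) + Ψ u := by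
                simp only [hcoldef]; rw [if_pos hlu]
              omega
          · by_cases hlv : cuts H m (blk H m v + 1) = n
            · have h1 := hcolnormal_lt u hlu
              have h2 : col v = (cfun f m + 1) * f (m + 1) + Ψ v := by
                simp only [hcoldef]; rw [if_pos hlv]
              omega
            · have hlu' : cuts H m (blk H m u + 1) < n :=
                lt_of_le_of_ne (cuts_le_n hw _) hlu
              have hlv' : cuts H m (blk H m v + 1) < n :=
                lt_of_le_of_ne (cuts_le_n hw _) hlv
              have hmix := hcross u v huv hb hlu' hlv'
              have hΦne : Φ u ≠ Φ v := Φ.valid hmix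
              simp only [hcoldef]
              rw [if_neg hlu, if_neg hlv]
              intro hcontra
              exact hΦne (enc_lemma (hΨlt u) (hΨlt v) hcontra).1
      · intro v
        show col v < cfun f (m + 1)
        have hcf : cfun f (m + 1) = (cfun f m + 1) * f (m + 1) + cfun f m + 1 := rfl
        by_cases hl : cuts H m (blk H m v + 1) = n
        · have h2 : col v = (cfun f m + 1) * f (m + 1) + Ψ v := by
            simp only [hcoldef]; rw [if_pos hl]
          have h3 := hΨle v
          omega
        · have h1 := hcolnormal_lt v hl
          omega

end Main

/-- If the hereditary class `C` is χ-bounded by a nondecreasing `f`, then the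
mixed extension `ME(C)` is χ-bounded, with bounding function `c` satisfying
`c(ω) ≤ (c(ω−1)+1)·f(ω) + c(ω−1) + 1`. -/
theorem mixedExtension_chi_bounded
    (C : ∀ m : ℕ, SimpleGraph (Fin m) → Prop)
    (hhered : ∀ (m l : ℕ) (f : Fin l → Fin m), StrictMono f →
      ∀ H : SimpleGraph (Fin m), C m H → C l (H.comap f))
    (f : ℕ → ℕ) (hf : Monotone f)
    (hchi : ∀ (m : ℕ) (H : SimpleGraph (Fin m)), C m H →
      H.Colorable (f H.cliqueNum)) :
    ∃ c : ℕ → ℕ,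
      (∀ ω, 1 ≤ ω → c ω ≤ (c (ω - 1) + 1) * f ω + c (ω - 1) + 1) ∧
      ∀ (n : ℕ) (G : SimpleGraph (Fin n)), MEMember C G →
        G.Colorable (c G.cliqueNum) := by
  refine ⟨cfun f, ?_, ?_⟩
  · intro ω hω
    obtain ⟨m, rfl⟩ : ∃ m, ω = m + 1 := ⟨ω - 1, by omega⟩
    have h1 : m + 1 - 1 = m := by omega
    rw [h1]
    exact le_of_eq rfl
  · intro n G hG
    obtain ⟨σ, hσ⟩ := hG
    have hOMP : OMP C (G.comap ⇑σ) := omp_of_surjProp C _ hσ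
    have hcol := main_lemma C hhered f hf hchi ((G.comap ⇑σ).cliqueNum) n (G.comap ⇑σ)
      hOMP (le_refl _)
    have hclique : (G.comap ⇑σ).cliqueNum = G.cliqueNum := by
      apply le_antisymm
      · exact cliqueNum_le' fun m s hs => le_cliqueNum' (isNClique_image' σ.injective hs)
      · apply cliqueNum_le'
        intro m s hs
        refine le_cliqueNum' (s := s.image ⇑σ.symm) ?_
        constructor
        · intro x hx y hy hxy
          simp only [Finset.coe_image, Set.mem_image, Finset.mem_coe] at hx hy
          obtain ⟨a, ha, rfl⟩ := hx
          obtain ⟨b, hb, rfl⟩ := hy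
          show G.Adj (σ (σ.symm a)) (σ (σ.symm b))
          rw [Equiv.apply_symm_apply, Equiv.apply_symm_apply]
          exact hs.1 ha hb fun hab => hxy (by rw [hab])
        · rw [Finset.card_image_of_injective _ σ.symm.injective, hs.2]
    rw [hclique] at hcol
    obtain ⟨CH, hCH⟩ := (SimpleGraph.colorable_iff_exists_bdd_nat_coloring _).mp hcol
    refine (SimpleGraph.colorable_iff_exists_bdd_nat_coloring _).mpr
      ⟨SimpleGraph.Coloring.mk (fun x => CH (σ.symm x)) ?_, fun v => hCH _⟩
    intro x y hxy
    apply CH.valid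
    show G.Adj (σ (σ.symm x)) (σ (σ.symm y))
    rw [Equiv.apply_symm_apply, Equiv.apply_symm_apply]
    exact hxy
end

section
/- Let G be a graph on ordered vertex set v_1 < ... < v_n and let I be an interval of vertices partitioned into its local modules L_1, ..., L_k (maximal intervals whose vertices all have the same neighborhood outside I). If the adjacency matrix of G (in this order) is d-mixed free, then the graph R on [k] with an edge ij whenever the zone [L_i, L_j] is mixed has at most (mt_d/2)·k edges, where mt_d is the Marcus–Tardos constant; consequently R is properly (mt_d + 1)-colorable. -/
/-- `M` has a `d`-mixed minor: a `d`-division (monotone surjective block maps)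
with all `d²` zones mixed. -/
def HasMixedMinor {m n : ℕ} (M : Matrix (Fin m) (Fin n) (Fin 3)) (d : ℕ) : Prop :=
  ∃ (r : Fin m → Fin d) (c : Fin n → Fin d),
    Monotone r ∧ Monotone c ∧ Function.Surjective r ∧ Function.Surjective c ∧
    ∀ i j : Fin d, ZoneMixed M (fun x => r x = i) (fun y => c y = j)

/-- Mixedness of a zone is monotone under enlarging the row and column blocks. -/
lemma zoneMixed_mono {m n : ℕ} (M : Matrix (Fin m) (Fin n) (Fin 3))
    {R R' : Fin m → Prop} {C C' : Fin n → Prop}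
    (hRR : ∀ i, R i → R' i) (hCC : ∀ j, C j → C' j) :
    ZoneMixed M R C → ZoneMixed M R' C' := by
  rintro (⟨h1, h2⟩ | ⟨⟨a, a', ha, ha', hane⟩, ⟨b, b', hb, hb', hbne⟩, ⟨x, y, hx, hy, hxy⟩⟩)
  · left
    refine ⟨fun h => h1 ?_, fun h => h2 ?_⟩
    · intro i hi j j' hj hj'
      exact h i (hRR i hi) j j' (hCC j hj) (hCC j' hj')
    · intro j hj i i' hi hi'
      exact h j (hCC j hj) i i' (hRR i hi) (hRR i' hi')
  · right
    exact ⟨⟨a, a', hRR _ ha, hRR _ ha', hane⟩, ⟨b, b', hCC _ hb, hCC _ hb', hbne⟩,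
      x, y, hRR _ hx, hCC _ hy, hxy⟩

/-- Counting the ordered adjacent pairs inside `S × S` fiberwise. -/
lemma pairs_card_fiber {k : ℕ} (R : SimpleGraph (Fin k)) [DecidableRel R.Adj]
    (S : Finset (Fin k)) :
    ((S ×ˢ S).filter fun p => R.Adj p.1 p.2).card
      = ∑ v ∈ S, (S.filter fun u => R.Adj v u).card := by
  rw [Finset.card_eq_sum_card_fiberwise (f := Prod.fst) (t := S)
    (fun p hp => (Finset.mem_product.1 (Finset.mem_filter.1 hp).1).1)]
  refine Finset.sum_congr rfl fun b hb => ?_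
  refine Finset.card_bij (fun p _ => p.2) ?_ ?_ ?_
  · intro p hp
    obtain ⟨hp1, hp2⟩ := Finset.mem_filter.1 hp
    obtain ⟨hp3, hp4⟩ := Finset.mem_filter.1 hp1
    obtain ⟨hpa, hpb⟩ := Finset.mem_product.1 hp3
    refine Finset.mem_filter.2 ⟨hpb, ?_⟩
    show R.Adj b p.2
    rw [← hp2]; exact hp4
  · intro p hp q hq hpq
    obtain ⟨hp1, hp2⟩ := Finset.mem_filter.1 hp
    obtain ⟨hq1, hq2⟩ := Finset.mem_filter.1 hq
    exact Prod.ext (hp2.trans hq2.symm) hpq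
  · intro u hu
    obtain ⟨huS, hadj⟩ := Finset.mem_filter.1 hu
    exact ⟨(b, u), Finset.mem_filter.2
      ⟨Finset.mem_filter.2 ⟨Finset.mem_product.2 ⟨hb, huS⟩, hadj⟩, rfl⟩, rfl⟩

/-- Degeneracy argument: a graph all of whose vertex subsets `S` span at most
`(mt/2)·|S|` edges is properly `(mt+1)`-colorable (greedy on a minimum-degree
vertex). -/
lemma degeneracy_color {k mt : ℕ} (R : SimpleGraph (Fin k)) [DecidableRel R.Adj]
    (key : ∀ S : Finset (Fin k),
      ((S ×ˢ S).filter fun p => R.Adj p.1 p.2).card ≤ mt * S.card) :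
    ∀ S : Finset (Fin k), ∃ g : Fin k → Fin (mt + 1),
      ∀ u ∈ S, ∀ v ∈ S, R.Adj u v → g u ≠ g v := by
  intro S
  induction S using Finset.strongInduction with
  | _ S ih =>
  rcases S.eq_empty_or_nonempty with rfl | hne
  · exact ⟨fun _ => ⟨0, Nat.succ_pos _⟩, by simp⟩
  · have hsum : ∑ v ∈ S, (S.filter fun u => R.Adj v u).card ≤ ∑ _v ∈ S, mt := by
      rw [← pairs_card_fiber R S, Finset.sum_const, smul_eq_mul, mul_comm]
      exact key S
    obtain ⟨v, hvS, hdeg⟩ := Finset.exists_le_of_sum_le hne hsum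
    obtain ⟨g, hg⟩ := ih (S.erase v) (Finset.erase_ssubset hvS)
    have hN : ((S.filter fun u => R.Adj v u).image g).card < mt + 1 :=
      lt_of_le_of_lt (le_trans Finset.card_image_le hdeg) (Nat.lt_succ_self mt)
    have hc : ∃ c : Fin (mt + 1), c ∉ (S.filter fun u => R.Adj v u).image g := by
      by_contra hcon
      push_neg at hcon
      have hsub : (Finset.univ : Finset (Fin (mt + 1)))
          ⊆ (S.filter fun u => R.Adj v u).image g := fun c _ => hcon c
      have := Finset.card_le_card hsub
      simp [Finset.card_univ] at this
      omega
    obtain ⟨c, hc⟩ := hc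
    refine ⟨Function.update g v c, ?_⟩
    intro u hu w hw hadj
    by_cases huv : u = v
    · subst huv
      have hwv : w ≠ u := fun h => R.irrefl (h ▸ hadj)
      rw [Function.update_self, Function.update_of_ne hwv]
      intro hEq
      exact hc (hEq ▸ Finset.mem_image_of_mem g (Finset.mem_filter.2 ⟨hw, hadj⟩))
    · by_cases hwv : w = v
      · subst hwv
        rw [Function.update_self, Function.update_of_ne huv]
        intro hEq
        exact hc (hEq ▸ Finset.mem_image_of_mem g
          (Finset.mem_filter.2 ⟨hu, hadj.symm⟩))
      · rw [Function.update_of_ne huv, Function.update_of_ne hwv]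
        exact hg u (Finset.mem_erase.2 ⟨huv, hu⟩) w (Finset.mem_erase.2 ⟨hwv, hw⟩) hadj

/-- Let `G` be a graph on the ordered vertex set `Fin n` whose adjacency matrix
is `d`-mixed free, let `I = [lo, hi]` be an interval of vertices partitioned
into its local modules `L_1, …, L_k` (consecutive, maximal sets of vertices
with the same neighbourhood outside `I`), and let `mt` be a Marcus–Tardos
constant for `d` (in any `k`-division of a `d`-mixed free matrix, at most
`mt·k` zones are mixed). Then the graph `R` on `Fin k` whose edges are the
mixed pairs of local modules has at most `(mt/2)·k` edges, and is therefore
properly `(mt+1)`-colorable. -/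
theorem mixedPairsGraph_few_edges {n d k : ℕ} (G : SimpleGraph (Fin n))
    (mt : ℕ)
    (hmt : ∀ (a b : ℕ) (M : Matrix (Fin a) (Fin b) (Fin 3)), ¬ HasMixedMinor M d →
      ∀ (l : ℕ) (r : Fin a → Fin l) (c : Fin b → Fin l),
        Monotone r → Monotone c → Function.Surjective r → Function.Surjective c →
        {p : Fin l × Fin l |
          ZoneMixed M (fun x => r x = p.1) (fun y => c y = p.2)}.ncard ≤ mt * l)
    (hfree : ¬ HasMixedMinor (adjMat G) d)
    (lo hi : ℕ) (hhi : hi < n)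
    (I : Set (Fin n)) (hI : I = {v : Fin n | lo ≤ v.val ∧ v.val ≤ hi})
    (part : Fin n → Fin k)
    (hmono : ∀ u v : Fin n, u ∈ I → v ∈ I → u ≤ v → part u ≤ part v)
    (hsurj : ∀ i : Fin k, ∃ v ∈ I, part v = i)
    (hloc : ∀ u v, u ∈ I → v ∈ I → part u = part v →
      ∀ w, w ∉ I → (G.Adj u w ↔ G.Adj v w))
    (hmax : ∀ u v : Fin n, u ∈ I → v ∈ I → v.val = u.val + 1 → part u ≠ part v →
      ∃ w, w ∉ I ∧ ¬ (G.Adj u w ↔ G.Adj v w))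
    (R : SimpleGraph (Fin k))
    (hR : ∀ i j, R.Adj i j ↔ i ≠ j ∧
      ZoneMixed (adjMat G) (fun x => x ∈ I ∧ part x = i) (fun y => y ∈ I ∧ part y = j)) :
    2 * R.edgeSet.ncard ≤ mt * k ∧ R.Colorable (mt + 1) := by
  classical
  rcases Nat.eq_zero_or_pos k with rfl | kpos
  · constructor
    · have : R.edgeSet = ∅ := Set.eq_empty_of_isEmpty _
      simp [this]
    · exact (R.colorable_of_fintype).mono (by simp)
  -- Set-up: clamping projection onto the interval `I`.
  obtain ⟨v0, hv0I, -⟩ := hsurj ⟨0, kpos⟩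
  have hlohi : lo ≤ hi := by
    rw [hI] at hv0I
    exact le_trans hv0I.1 hv0I.2
  set proj : Fin n → Fin n :=
    fun v => ⟨min (max v.val lo) hi, lt_of_le_of_lt (min_le_right _ _) hhi⟩ with hproj
  have hprojI : ∀ v, proj v ∈ I := by
    intro v
    rw [hI]
    exact ⟨le_min (le_max_right _ _) hlohi, min_le_right _ _⟩
  have hprojfix : ∀ x ∈ I, proj x = x := by
    intro x hx
    rw [hI] at hx
    obtain ⟨hx1, hx2⟩ := hx
    apply Fin.ext
    show min (max x.val lo) hi = x.val
    rw [max_eq_left hx1, min_eq_left hx2]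
  have hprojmono : Monotone proj := by
    intro u v huv
    rw [Fin.le_def] at huv ⊢
    show min (max u.val lo) hi ≤ min (max v.val lo) hi
    exact min_le_min (max_le_max huv (le_refl lo)) (le_refl hi)
  -- The hereditary edge bound.
  have key : ∀ S : Finset (Fin k),
      ((S ×ˢ S).filter fun p => R.Adj p.1 p.2).card ≤ mt * S.card := by
    intro S
    rcases S.eq_empty_or_nonempty with rfl | hSne
    · simp
    have spos : 0 < S.card := Finset.card_pos.2 hSne
    set cf : Fin k → ℕ := fun i => (S.filter fun x => x ≤ i).card with hcf
    have hcle : ∀ i, cf i ≤ S.card := fun i => Finset.card_le_card (Finset.filter_subset _ _)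
    set f : Fin k → Fin S.card := fun i => ⟨cf i - 1, by have := hcle i; omega⟩ with hf
    have hcmono : ∀ i j : Fin k, i ≤ j → cf i ≤ cf j := by
      intro i j hij
      refine Finset.card_le_card ?_
      intro x hx
      obtain ⟨h1, h2⟩ := Finset.mem_filter.1 hx
      exact Finset.mem_filter.2 ⟨h1, le_trans h2 hij⟩
    have hfmono : Monotone f := by
      intro i j hij
      rw [Fin.le_def]
      have := hcmono i j hij
      show cf i - 1 ≤ cf j - 1
      omega
    have hcpos : ∀ u ∈ S, 1 ≤ cf u := fun u hu =>
      Finset.card_pos.2 ⟨u, Finset.mem_filter.2 ⟨hu, le_refl u⟩⟩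
    have hstrict : ∀ u ∈ S, ∀ v ∈ S, u < v → cf u < cf v := by
      intro u hu v hv huv
      have hvnot : v ∉ S.filter fun x => x ≤ u := by
        intro h
        exact absurd (Finset.mem_filter.1 h).2 (not_le.2 huv)
      have hsub : insert v (S.filter fun x => x ≤ u) ⊆ S.filter fun x => x ≤ v := by
        intro x hx
        rcases Finset.mem_insert.1 hx with rfl | hx
        · exact Finset.mem_filter.2 ⟨hv, le_refl _⟩
        · obtain ⟨hxS, hxu⟩ := Finset.mem_filter.1 hx
          exact Finset.mem_filter.2 ⟨hxS, le_trans hxu (le_of_lt huv)⟩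
      calc cf u < cf u + 1 := Nat.lt_succ_self _
        _ = (insert v (S.filter fun x => x ≤ u)).card :=
            (Finset.card_insert_of_notMem hvnot).symm
        _ ≤ cf v := Finset.card_le_card hsub
    have hfinj : ∀ u ∈ S, ∀ v ∈ S, f u = f v → u = v := by
      intro u hu v hv hfe
      have hfe' : cf u - 1 = cf v - 1 := congrArg Fin.val hfe
      by_contra hne
      rcases lt_or_gt_of_ne hne with h | h
      · have h1 := hstrict u hu v hv h
        have h2 := hcpos u hu
        omega
      · have h1 := hstrict v hv u hu h
        have h2 := hcpos v hv
        omega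
    have hfsurj : Function.Surjective f := by
      have hbij : Function.Bijective (fun x : {x // x ∈ S} => f x.1) := by
        rw [Fintype.bijective_iff_injective_and_card]
        refine ⟨fun a b hab => Subtype.ext (hfinj a.1 a.2 b.1 b.2 hab), ?_⟩
        simp [Fintype.card_coe]
      intro t
      obtain ⟨x, hx⟩ := hbij.2 t
      exact ⟨x.1, hx⟩
    set r : Fin n → Fin S.card := fun v => f (part (proj v)) with hr
    have hrmono : Monotone r := fun u v huv =>
      hfmono (hmono _ _ (hprojI u) (hprojI v) (hprojmono huv))
    have hrsurj : Function.Surjective r := by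
      intro t
      obtain ⟨i, hi⟩ := hfsurj t
      obtain ⟨v, hvI, hv⟩ := hsurj i
      refine ⟨v, ?_⟩
      show f (part (proj v)) = t
      rw [hprojfix v hvI, hv, hi]
    have hzone := hmt n n (adjMat G) hfree S.card r r hrmono hrmono hrsurj hrsurj
    have hmap : ∀ p ∈ (S ×ˢ S).filter fun p => R.Adj p.1 p.2,
        (f p.1, f p.2) ∈ {p : Fin S.card × Fin S.card |
          ZoneMixed (adjMat G) (fun x => r x = p.1) (fun y => r y = p.2)}.toFinset := by
      intro p hp
      obtain ⟨hpmem, hadj⟩ := Finset.mem_filter.1 hp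
      rw [Set.mem_toFinset]
      have hz := ((hR p.1 p.2).1 hadj).2
      refine zoneMixed_mono (adjMat G) ?_ ?_ hz
      · rintro x ⟨hxI, hxp⟩
        show f (part (proj x)) = f p.1
        rw [hprojfix x hxI, hxp]
      · rintro y ⟨hyI, hyp⟩
        show f (part (proj y)) = f p.2
        rw [hprojfix y hyI, hyp]
    have hinj : (((S ×ˢ S).filter fun p => R.Adj p.1 p.2) : Set (Fin k × Fin k)).InjOn
        (fun p => (f p.1, f p.2)) := by
      intro p hp q hq hpq
      rw [Finset.mem_coe] at hp hq
      obtain ⟨hp1, hp2⟩ := Finset.mem_product.1 (Finset.mem_filter.1 hp).1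
      obtain ⟨hq1, hq2⟩ := Finset.mem_product.1 (Finset.mem_filter.1 hq).1
      have e1 : f p.1 = f q.1 := congrArg Prod.fst hpq
      have e2 : f p.2 = f q.2 := congrArg Prod.snd hpq
      exact Prod.ext (hfinj p.1 hp1 q.1 hq1 e1) (hfinj p.2 hp2 q.2 hq2 e2)
    calc ((S ×ˢ S).filter fun p => R.Adj p.1 p.2).card
        ≤ {p : Fin S.card × Fin S.card |
            ZoneMixed (adjMat G) (fun x => r x = p.1) (fun y => r y = p.2)}.toFinset.card :=
          Finset.card_le_card_of_injOn _ hmap hinj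
      _ = {p : Fin S.card × Fin S.card |
            ZoneMixed (adjMat G) (fun x => r x = p.1) (fun y => r y = p.2)}.ncard :=
          (Set.ncard_eq_toFinset_card' _).symm
      _ ≤ mt * S.card := hzone
  constructor
  · -- edge count
    have h1 := key Finset.univ
    have hpairs : ∑ v, R.degree v
        = ((Finset.univ ×ˢ Finset.univ).filter
            fun p : Fin k × Fin k => R.Adj p.1 p.2).card := by
      rw [pairs_card_fiber R Finset.univ]
      refine Finset.sum_congr rfl fun v _ => ?_
      rw [SimpleGraph.degree, SimpleGraph.neighborFinset_eq_filter]
    have hedge : R.edgeSet.ncard = R.edgeFinset.card := Set.ncard_eq_toFinset_card' _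
    rw [hedge, ← SimpleGraph.sum_degrees_eq_twice_card_edges, hpairs]
    calc ((Finset.univ ×ˢ Finset.univ).filter
          fun p : Fin k × Fin k => R.Adj p.1 p.2).card
        ≤ mt * (Finset.univ : Finset (Fin k)).card := h1
      _ = mt * k := by simp
  · -- colorability
    obtain ⟨g, hg⟩ := degeneracy_color R key Finset.univ
    exact ⟨SimpleGraph.Coloring.mk g fun {u v} h =>
      hg u (Finset.mem_univ u) v (Finset.mem_univ v) h⟩
end
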